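/- Let a, b ∈ End(k²) and f ∈ (k²)*. The triple (a, b; f) is stable (no nonzero subspace invariant under both a and b lies in ker f) if and only if (f, f∘a) is linearly independent or (f, f∘b) is linearly independent. -/

import Mathlib

private lemma ext2_aux {k : Type*} [Field k] (h : (Fin 2 → k) →ₗ[k] k)
    (h0 : h (Pi.single 0 1) = 0) (h1 : h (Pi.single 1 1) = 0) : h = 0 := by
  apply LinearMap.ext; intro x
  have hx : x = x 0 • (Pi.single 0 1 : Fin 2 → k) + x 1 • (Pi.single 1 1 : Fin 2 → k) := by
    funext i; fin_cases i <;> simp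
  rw [hx]
  simp [h0, h1]

private lemma dep_aux {k : Type*} [Field k] (f g : (Fin 2 → k) →ₗ[k] k)
    (u : Fin 2 → k) (hu : u ≠ 0) (hf : f u = 0) (hg : g u = 0) :
    ¬ LinearIndependent k ![f, g] := by
  intro hind
  set e0 : Fin 2 → k := Pi.single 0 1 with he0
  set e1 : Fin 2 → k := Pi.single 1 1 with he1
  have hu' : u = u 0 • e0 + u 1 • e1 := by funext i; fin_cases i <;> simp [he0, he1]
  have hfe : u 0 * f e0 + u 1 * f e1 = 0 := by
    have := hf; rw [hu'] at this; simpa [smul_eq_mul] using this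
  have hge : u 0 * g e0 + u 1 * g e1 = 0 := by
    have := hg; rw [hu'] at this; simpa [smul_eq_mul] using this
  have key : ∀ (c d : k), c * f e0 + d * g e0 = 0 → c * f e1 + d * g e1 = 0 →
      c = 0 ∧ d = 0 := by
    intro c d h0 h1
    refine LinearIndependent.pair_iff.mp hind c d ?_
    apply ext2_aux
    · simpa [smul_eq_mul] using h0
    · simpa [smul_eq_mul] using h1
  have hfne : f ≠ 0 := by
    have := hind.ne_zero 0; simpa using this
  by_cases hu0 : u 0 = 0
  · have hu1 : u 1 ≠ 0 := by
      intro hu1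
      apply hu
      funext i; fin_cases i <;> simp [hu0, hu1]
    have hdet : u 1 * (g e0 * f e1 + (-(f e0)) * g e1) = 0 := by
      linear_combination (g e0) * hfe - (f e0) * hge
    have hdet' : g e0 * f e1 + (-(f e0)) * g e1 = 0 :=
      (mul_eq_zero.mp hdet).resolve_left hu1
    have h0 : g e0 * f e0 + (-(f e0)) * g e0 = 0 := by ring
    obtain ⟨hge0, hfe0⟩ := key (g e0) (-(f e0)) h0 hdet'
    have hfe0' : f e0 = 0 := neg_eq_zero.mp hfe0
    have hfe1 : f e1 = 0 := by
      have : u 1 * f e1 = 0 := by linear_combination hfe - hu0 * f e0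
      exact (mul_eq_zero.mp this).resolve_left hu1
    exact hfne (ext2_aux f hfe0' hfe1)
  · have hdet : u 0 * (g e1 * f e0 + (-(f e1)) * g e0) = 0 := by
      linear_combination (g e1) * hfe - (f e1) * hge
    have hdet' : g e1 * f e0 + (-(f e1)) * g e0 = 0 :=
      (mul_eq_zero.mp hdet).resolve_left hu0
    have h1 : g e1 * f e1 + (-(f e1)) * g e1 = 0 := by ring
    obtain ⟨hge1, hfe1⟩ := key (g e1) (-(f e1)) hdet' h1
    have hfe1' : f e1 = 0 := neg_eq_zero.mp hfe1
    have hfe0 : f e0 = 0 := by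
      have : u 0 * f e0 = 0 := by linear_combination hfe - u 1 * hfe1'
      exact (mul_eq_zero.mp this).resolve_left hu0
    exact hfne (ext2_aux f hfe0 hfe1')

private lemma dep_elim {k : Type*} [Field k] {V : Type*} [AddCommGroup V] [Module k V]
    {f g : V →ₗ[k] k} (hf : f ≠ 0) (h : ¬ LinearIndependent k ![f, g]) :
    ∃ c : k, g = c • f := by
  rw [LinearIndependent.pair_iff] at h
  push_neg at h
  obtain ⟨s, t, hst, hne⟩ := h
  by_cases ht : t = 0
  · subst ht
    simp only [zero_smul, add_zero] at hst
    have hs : s ≠ 0 := by tauto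
    exact absurd ((smul_eq_zero.mp hst).resolve_left hs) hf
  · refine ⟨-s / t, ?_⟩
    have : t • g = (-s) • f := by
      exact (eq_neg_of_add_eq_zero_right hst).trans (neg_smul s f).symm
    calc g = t⁻¹ • (t • g) := by rw [smul_smul, inv_mul_cancel₀ ht, one_smul]
    _ = (-s / t) • f := by rw [this, smul_smul, div_eq_inv_mul]

theorem stable_two_ops_one_functional_iff
    {k : Type*} [Field k]
    (a b : Module.End k (Fin 2 → k)) (f : (Fin 2 → k) →ₗ[k] k) :
    (∀ U : Submodule k (Fin 2 → k),
        U.map a ≤ U → U.map b ≤ U → U ≤ LinearMap.ker f → U = ⊥) ↔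
      (LinearIndependent k ![f, f ∘ₗ (a : (Fin 2 → k) →ₗ[k] (Fin 2 → k))] ∨
       LinearIndependent k ![f, f ∘ₗ (b : (Fin 2 → k) →ₗ[k] (Fin 2 → k))]) := by
  constructor
  · intro h
    by_contra hcon
    push_neg at hcon
    obtain ⟨hA, hB⟩ := hcon
    by_cases hf : f = 0
    · have htop : (⊤ : Submodule k (Fin 2 → k)) = ⊥ :=
        h ⊤ le_top le_top (by simp [hf])
      have : (Pi.single 0 1 : Fin 2 → k) ∈ (⊥ : Submodule k (Fin 2 → k)) := by
        rw [← htop]; trivial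
      simp only [Submodule.mem_bot] at this
      have := congrFun this 0
      simp at this
    · obtain ⟨ca, hca⟩ := dep_elim hf hA
      obtain ⟨cb, hcb⟩ := dep_elim hf hB
      have hker : LinearMap.ker f = ⊥ := by
        apply h
        · rintro x ⟨y, hy, rfl⟩
          simp only [SetLike.mem_coe, LinearMap.mem_ker] at hy
          rw [LinearMap.mem_ker]
          have : (f ∘ₗ (a : (Fin 2 → k) →ₗ[k] (Fin 2 → k))) y = (ca • f) y := by rw [hca]
          simpa [hy] using this
        · rintro x ⟨y, hy, rfl⟩
          simp only [SetLike.mem_coe, LinearMap.mem_ker] at hy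
          rw [LinearMap.mem_ker]
          have : (f ∘ₗ (b : (Fin 2 → k) →ₗ[k] (Fin 2 → k))) y = (cb • f) y := by rw [hcb]
          simpa [hy] using this
        · exact le_rfl
      have hinj : Function.Injective f := LinearMap.ker_eq_bot.mp hker
      have hle := LinearMap.finrank_le_finrank_of_injective hinj
      simp [Module.finrank_self] at hle
  · rintro (hA | hB) <;> intro U hUa hUb hUf <;>
      rw [Submodule.eq_bot_iff] <;> intro u hu <;> by_contra hune
    · refine dep_aux f (f ∘ₗ (a : (Fin 2 → k) →ₗ[k] (Fin 2 → k))) u hune ?_ ?_ hA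
      · exact hUf hu
      · exact hUf (hUa (Submodule.mem_map_of_mem hu))
    · refine dep_aux f (f ∘ₗ (b : (Fin 2 → k) →ₗ[k] (Fin 2 → k))) u hune ?_ ?_ hB
      · exact hUf hu
      · exact hUf (hUb (Submodule.mem_map_of_mem hu))
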